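/- Let A be a subspace of ℝ^n of dimension d and let j ∈ {1,…,min(d,n−d)}. If A is (n−d,j)-irrational, then for every e ∈ {j,…,n−j}, A is (e,j)-irrational. -/

import Mathlib

noncomputable section

open Finset Module

/-- A vector of `ℝⁿ` with integer coordinates. -/
def IsIntVec {n : ℕ} (v : EuclideanSpace ℝ (Fin n)) : Prop :=
  ∀ i, ∃ z : ℤ, v i = (z : ℝ)

/-- A rational subspace of `ℝⁿ`: one spanned by vectors with rational coordinates. -/
def IsRationalSubspace {n : ℕ} (B : Submodule ℝ (EuclideanSpace ℝ (Fin n))) : Prop :=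
  ∃ s : Set (EuclideanSpace ℝ (Fin n)),
    (∀ v ∈ s, ∀ i, ∃ q : ℚ, v i = (q : ℝ)) ∧ Submodule.span ℝ s = B

/-- `A` is `(e,j)`-irrational: every rational subspace `B` of dimension `e` satisfies
`dim (A ⊓ B) < j + g(dim A, e, n)` where `g(d,e,n) = max 0 (d+e-n)`. -/
def IsIrrational {n : ℕ} (A : Submodule ℝ (EuclideanSpace ℝ (Fin n))) (e j : ℕ) : Prop :=
  ∀ B : Submodule ℝ (EuclideanSpace ℝ (Fin n)),
    IsRationalSubspace B → finrank ℝ B = e →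
      finrank ℝ ↥(A ⊓ B) < j + (finrank ℝ A + e - n)

/-- The angle `ω(X,Y) = ‖X∧Y‖ / (‖X‖·‖Y‖)`. -/
def omegaAngle {n : ℕ} (X Y : EuclideanSpace ℝ (Fin n)) : ℝ :=
  Real.sqrt (‖X‖ ^ 2 * ‖Y‖ ^ 2 - (inner ℝ X Y : ℝ) ^ 2) / (‖X‖ * ‖Y‖)

/-- First angle `ψ₁(A,B)` between two subspaces. -/
def psiOne {n : ℕ} (A B : Submodule ℝ (EuclideanSpace ℝ (Fin n))) : ℝ :=
  sInf {t | ∃ X ∈ A, X ≠ 0 ∧ ∃ Y ∈ B, Y ≠ 0 ∧ t = omegaAngle X Y}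

/-- `‖X₁ ∧ ⋯ ∧ X_e‖`, as the square root of the Gram determinant. -/
def gramNorm {n e : ℕ} (X : Fin e → EuclideanSpace ℝ (Fin n)) : ℝ :=
  Real.sqrt (Matrix.of fun i j : Fin e => (inner ℝ (X i) (X j) : ℝ)).det

/-- `X` is a `ℤ`-basis of the lattice `B ∩ ℤⁿ`. -/
def IsZBasis {n e : ℕ} (X : Fin e → EuclideanSpace ℝ (Fin n))
    (B : Submodule ℝ (EuclideanSpace ℝ (Fin n))) : Prop :=
  (∀ i, X i ∈ B) ∧ (∀ i, IsIntVec (X i)) ∧ LinearIndependent ℝ X ∧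
    ∀ v ∈ B, IsIntVec v → ∃ c : Fin e → ℤ, v = ∑ i, (c i : ℝ) • X i

/-- The height `H(B)` of a rational subspace: the common value of `‖X₁ ∧ ⋯ ∧ X_e‖`
over `ℤ`-bases of the lattice `B ∩ ℤⁿ`. -/
def height {n : ℕ} (B : Submodule ℝ (EuclideanSpace ℝ (Fin n))) : ℝ :=
  sSup {h | ∃ e : ℕ, ∃ X : Fin e → EuclideanSpace ℝ (Fin n), IsZBasis X B ∧ h = gramNorm X}

/-- The Diophantine exponent `μ_n(A|e)₁ ∈ ℝ ∪ {+∞}`. -/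
def diophExp {n : ℕ} (A : Submodule ℝ (EuclideanSpace ℝ (Fin n))) (e : ℕ) : EReal :=
  sSup {x : EReal | ∃ μ : ℝ, x = (μ : ℝ) ∧ 0 < μ ∧
    {B : Submodule ℝ (EuclideanSpace ℝ (Fin n)) |
      IsRationalSubspace B ∧ finrank ℝ B = e ∧ psiOne A B ≤ height B ^ (-μ)}.Infinite}


lemma rat_shrink {n : ℕ} {B : Submodule ℝ (EuclideanSpace ℝ (Fin n))} (hB : IsRationalSubspace B)
    {m : ℕ} (hm : m ≤ finrank ℝ B) :
    ∃ B', B' ≤ B ∧ IsRationalSubspace B' ∧ finrank ℝ B' = m := by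
  obtain ⟨s, hs, hspan⟩ := hB
  obtain ⟨b, hbs, hbspan, hbli⟩ := exists_linearIndependent ℝ s
  have hbfin : b.Finite := hbli.setFinite
  haveI := hbfin.fintype
  have hcard : finrank ℝ (Submodule.span ℝ b) = hbfin.toFinset.card := by
    rw [finrank_span_set_eq_card hbli]
    congr 1
    ext x; simp
  have hcard' : hbfin.toFinset.card = finrank ℝ B := by
    rw [← hcard, hbspan, hspan]
  obtain ⟨u, hub, hucard⟩ := Finset.exists_subset_card_eq (hm.trans_eq hcard'.symm)
  have husub : (u : Set (EuclideanSpace ℝ (Fin n))) ⊆ b := by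
    intro x hx
    have := hub hx
    simpa using this
  have huli : LinearIndependent ℝ (fun x : (u : Set (EuclideanSpace ℝ (Fin n))) => (x : EuclideanSpace ℝ (Fin n))) :=
    LinearIndepOn.mono (v := id) (s := b) hbli husub
  refine ⟨Submodule.span ℝ (u : Set _), ?_, ⟨(u : Set _), ?_, rfl⟩, ?_⟩
  · rw [← hspan]
    exact Submodule.span_mono (husub.trans hbs)
  · intro v hv i
    exact hs v (hbs (husub hv)) i
  · rw [finrank_span_set_eq_card huli]
    simpa using hucard

lemma rat_enlarge_one {n : ℕ} {B : Submodule ℝ (EuclideanSpace ℝ (Fin n))}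
    (hB : IsRationalSubspace B) (hlt : finrank ℝ B < n) :
    ∃ B', B ≤ B' ∧ IsRationalSubspace B' ∧ finrank ℝ B' = finrank ℝ B + 1 := by
  obtain ⟨s, hs, hspan⟩ := hB
  have hex : ∃ i : Fin n, EuclideanSpace.single i (1:ℝ) ∉ B := by
    by_contra hc
    push_neg at hc
    have htop : (⊤ : Submodule ℝ (EuclideanSpace ℝ (Fin n))) ≤ B := by
      rw [← (EuclideanSpace.basisFun (Fin n) ℝ).toBasis.span_eq, Submodule.span_le]
      rintro x ⟨i, rfl⟩
      simp [EuclideanSpace.basisFun]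
      exact hc i
    have : finrank ℝ B = n := by
      rw [le_antisymm le_top htop, finrank_top, finrank_euclideanSpace_fin]
    omega
  obtain ⟨i, hi⟩ := hex
  set x := EuclideanSpace.single i (1:ℝ) with hx
  have hxne : x ≠ 0 := by
    intro hzero
    have : x i = 0 := by rw [hzero]; rfl
    simp [hx, EuclideanSpace.single_apply] at this
  have hinf : B ⊓ Submodule.span ℝ {x} = ⊥ := by
    rw [eq_bot_iff]
    rintro y ⟨hyB, hysp⟩
    obtain ⟨c, rfl⟩ := Submodule.mem_span_singleton.mp hysp
    rcases eq_or_ne c 0 with rfl | hc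
    · simp
    · exact absurd (by simpa [smul_smul, inv_mul_cancel₀ hc] using B.smul_mem c⁻¹ hyB) hi
  refine ⟨B ⊔ Submodule.span ℝ {x}, le_sup_left, ⟨s ∪ {x}, ?_, ?_⟩, ?_⟩
  · intro v hv k
    rcases hv with hv | hv
    · exact hs v hv k
    · refine ⟨if k = i then 1 else 0, ?_⟩
      rcases Set.mem_singleton_iff.mp hv with rfl
      rw [hx, EuclideanSpace.single_apply]
      split <;> simp
  · rw [Submodule.span_union, hspan]
  · have key := Submodule.finrank_sup_add_finrank_inf_eq B (Submodule.span ℝ {x})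
    rw [hinf, finrank_span_singleton hxne] at key
    simpa using key

lemma rat_enlarge {n : ℕ} {B : Submodule ℝ (EuclideanSpace ℝ (Fin n))}
    (hB : IsRationalSubspace B) {m : ℕ} (hm : finrank ℝ B ≤ m) (hmn : m ≤ n) :
    ∃ B', B ≤ B' ∧ IsRationalSubspace B' ∧ finrank ℝ B' = m := by
  induction m, hm using Nat.le_induction with
  | base => exact ⟨B, le_rfl, hB, rfl⟩
  | succ m hm ih =>
    obtain ⟨B', hBB', hB'rat, hB'rank⟩ := ih (by omega)
    obtain ⟨B'', hB'B'', hB''rat, hB''rank⟩ := rat_enlarge_one hB'rat (by omega)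
    exact ⟨B'', hBB'.trans hB'B'', hB''rat, by omega⟩

/-- If `A` (of dimension `d`) is `(n−d,j)`-irrational, then `A` is
`(e,j)`-irrational for every `e ∈ {j,…,n−j}`. -/
theorem statement5 (n : ℕ) (A : Submodule ℝ (EuclideanSpace ℝ (Fin n))) (d j : ℕ)
    (hA : finrank ℝ A = d) (hj1 : 1 ≤ j) (hj2 : j ≤ min d (n - d))
    (h : IsIrrational A (n - d) j) :
    ∀ e, j ≤ e → e ≤ n - j → IsIrrational A e j := by
  have hdn : d ≤ n := by
    have := Submodule.finrank_le A
    rw [hA, finrank_euclideanSpace_fin] at this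
    exact this
  intro e hje hjn B hBrat hBe
  rw [hA]
  by_cases he : e ≤ n - d
  · -- enlarge B to dimension n - d
    obtain ⟨B', hBB', hB'rat, hB'rank⟩ := rat_enlarge (m := n - d) hBrat (hBe.trans_le he) (by omega)
    have hr' := h B' hB'rat hB'rank
    rw [hA] at hr'
    have hmono : finrank ℝ ↥(A ⊓ B) ≤ finrank ℝ ↥(A ⊓ B') :=
      Submodule.finrank_mono (inf_le_inf_left A hBB')
    omega
  · -- shrink B to dimension n - d
    obtain ⟨B', hB'B, hB'rat, hB'rank⟩ := rat_shrink (m := n - d) hBrat (by omega)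
    have hr' := h B' hB'rat hB'rank
    rw [hA] at hr'
    have key := Submodule.finrank_sup_add_finrank_inf_eq (A ⊓ B) B'
    have hAB' : (A ⊓ B) ⊓ B' = A ⊓ B' := by
      rw [inf_assoc, inf_eq_right.mpr hB'B]
    rw [hAB', hB'rank] at key
    have hsup : finrank ℝ ↥((A ⊓ B) ⊔ B') ≤ e := by
      rw [← hBe]
      exact Submodule.finrank_mono (sup_le inf_le_right hB'B)
    omega
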